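/- arXiv:0806.2075 — 5 statements merged into one kernel-verified Lean document; each statement's English description precedes it below -/
import Mathlib

section
/- For n×n positive semidefinite complex matrices A₁,…,A_k, the span of all Hadamard products (A₁x₁)∘⋯∘(A_kx_k) over x₁,…,x_k ∈ ℂⁿ equals the range of the Hadamard product A₁∘⋯∘A_k. -/
open Matrix
open scoped ComplexOrder

private noncomputable def FzAux {n k : ℕ} (C : Fin k → Matrix (Fin n) (Fin n) ℂ)
    (z : Fin n → ℂ) (p : Fin k → Fin n) : ℂ :=
  ∑ i, z i * ∏ m, C m (p m) i

private lemma aux_mem_range {n : ℕ} {B : Matrix (Fin n) (Fin n) ℂ} (hB : B.IsHermitian)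
    {v : Fin n → ℂ} (hv : ∀ z : Fin n → ℂ, B.mulVec z = 0 → star z ⬝ᵥ v = 0) :
    v ∈ LinearMap.range B.mulVecLin := by
  let T : EuclideanSpace ℂ (Fin n) →ₗ[ℂ] EuclideanSpace ℂ (Fin n) := Matrix.toEuclideanLin B
  have hle : LinearMap.range T ≤ (LinearMap.ker T)ᗮ := by
    rintro _ ⟨y, rfl⟩ z hz
    have hz' : B.mulVec z = 0 := congrArg WithLp.ofLp hz
    show inner ℂ z (T y) = (0 : ℂ)
    have h1 : inner ℂ z (T y) = star (z : Fin n → ℂ) ⬝ᵥ B.mulVec y := by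
      rw [EuclideanSpace.inner_eq_star_dotProduct, dotProduct_comm]; rfl
    rw [h1, dotProduct_mulVec]
    have h2 : star (z : Fin n → ℂ) ᵥ* B = star (B.mulVec z) := by
      rw [star_mulVec, hB.eq]
    rw [h2, hz']
    simp
  have hrange : LinearMap.range T = (LinearMap.ker T)ᗮ := by
    apply Submodule.eq_of_le_of_finrank_eq hle
    have h1 := LinearMap.finrank_range_add_finrank_ker T
    have h2 := Submodule.finrank_add_finrank_orthogonal (K := LinearMap.ker T)
    omega
  have hvmem : (WithLp.toLp 2 v : EuclideanSpace ℂ (Fin n)) ∈ (LinearMap.ker T)ᗮ := by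
    intro z hz
    rw [EuclideanSpace.inner_eq_star_dotProduct, dotProduct_comm]
    exact hv z (congrArg WithLp.ofLp hz)
  rw [← hrange] at hvmem
  obtain ⟨y, hy⟩ := hvmem
  exact ⟨y.ofLp, congrArg WithLp.ofLp hy⟩

private lemma hadamard_entry {n k : ℕ} (C : Fin k → Matrix (Fin n) (Fin n) ℂ) (i j : Fin n) :
    (∏ m, ((C m)ᴴ * C m) i j)
      = ∑ p : Fin k → Fin n, ∏ m, (star (C m (p m) i) * C m (p m) j) := by
  have h : ∀ m : Fin k, ((C m)ᴴ * C m) i j = ∑ q, star (C m q i) * C m q j := by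
    intro m; simp [Matrix.mul_apply, conjTranspose_apply]
  simp_rw [h]
  rw [Finset.prod_univ_sum]
  rfl

private lemma claim1 {n k : ℕ} (C : Fin k → Matrix (Fin n) (Fin n) ℂ) (z : Fin n → ℂ) :
    star z ⬝ᵥ (Matrix.of fun i j => ∏ m, ((C m)ᴴ * C m) i j).mulVec z
      = ∑ p : Fin k → Fin n, star (FzAux C z p) * FzAux C z p := by
  simp only [dotProduct, mulVec, Matrix.of_apply, Pi.star_apply, FzAux]
  simp_rw [hadamard_entry C]
  simp_rw [Finset.sum_mul, Finset.mul_sum]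
  simp_rw [star_sum]
  simp_rw [Finset.sum_mul]
  conv_lhs => enter [2, x]; rw [Finset.sum_comm]
  rw [Finset.sum_comm]
  refine Finset.sum_congr rfl fun p _ => ?_
  conv_rhs => rw [Finset.sum_comm]
  refine Finset.sum_congr rfl fun i _ => Finset.sum_congr rfl fun j _ => ?_
  simp only [star_mul', Finset.prod_mul_distrib, star_prod]
  ring

private lemma claim2 {n k : ℕ} (C : Fin k → Matrix (Fin n) (Fin n) ℂ)
    (z : Fin n → ℂ) (x : Fin k → Fin n → ℂ) :
    star z ⬝ᵥ (fun i => ∏ m, ((C m)ᴴ * C m).mulVec (x m) i)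
      = ∑ p : Fin k → Fin n,
          star (FzAux C z p) * ∏ m, (C m).mulVec (x m) (p m) := by
  have key : ∀ i, (∏ m, ((C m)ᴴ * C m).mulVec (x m) i)
      = ∑ p : Fin k → Fin n,
          ∏ m, (star (C m (p m) i) * (C m).mulVec (x m) (p m)) := by
    intro i
    have h1 : ∀ m : Fin k, ((C m)ᴴ * C m).mulVec (x m) i
        = ∑ q, star (C m q i) * (C m).mulVec (x m) q := by
      intro m
      rw [← Matrix.mulVec_mulVec]
      simp [mulVec, dotProduct, conjTranspose_apply]
    simp_rw [h1]
    rw [Finset.prod_univ_sum]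
    rfl
  simp only [dotProduct, Pi.star_apply, key, FzAux]
  simp_rw [Finset.mul_sum, star_sum, Finset.sum_mul]
  rw [Finset.sum_comm]
  refine Finset.sum_congr rfl fun p _ => Finset.sum_congr rfl fun i _ => ?_
  simp only [star_mul', Finset.prod_mul_distrib, star_prod]
  ring

open scoped MatrixOrder in
private lemma psd_eq_mul_aux {n : ℕ} (A : Matrix (Fin n) (Fin n) ℂ) (h : A.PosSemidef) :
    ∃ C : Matrix (Fin n) (Fin n) ℂ, A = Cᴴ * C := by
  obtain ⟨B, hB⟩ := CStarAlgebra.nonneg_iff_eq_star_mul_self.mp h.nonneg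
  exact ⟨B, hB⟩

/-- For n×n positive semidefinite complex matrices A₁,…,A_k, the span of all Hadamard
products (A₁x₁)∘⋯∘(A_kx_k) over x₁,…,x_k ∈ ℂⁿ equals the range of A₁∘⋯∘A_k. -/
theorem stmt1 (n k : ℕ) (A : Fin k → Matrix (Fin n) (Fin n) ℂ)
    (hA : ∀ m, (A m).PosSemidef) :
    Submodule.span ℂ
      {v : Fin n → ℂ | ∃ x : Fin k → (Fin n → ℂ),
        v = fun i => ∏ m, (A m).mulVec (x m) i}
    = LinearMap.range (Matrix.mulVecLin (Matrix.of fun i j => ∏ m, A m i j)) := by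
  choose C hC using fun m => psd_eq_mul_aux (A m) (hA m)
  have hCeq : A = fun m => (C m)ᴴ * C m := funext hC
  subst hCeq
  apply le_antisymm
  · rw [Submodule.span_le]
    rintro v ⟨x, rfl⟩
    have hHerm : (Matrix.of fun i j => ∏ m, ((C m)ᴴ * C m) i j).IsHermitian := by
      ext i j
      simp only [conjTranspose_apply, Matrix.of_apply, star_prod]
      refine Finset.prod_congr rfl fun m _ => ?_
      have := (Matrix.posSemidef_conjTranspose_mul_self (C m)).1
      calc star (((C m)ᴴ * C m) j i) = ((C m)ᴴ * C m)ᴴ i j := rfl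
        _ = ((C m)ᴴ * C m) i j := by rw [this]
    apply aux_mem_range hHerm
    intro z hz
    have h0 : star z ⬝ᵥ (Matrix.of fun i j => ∏ m, ((C m)ᴴ * C m) i j).mulVec z = 0 := by
      rw [hz]; simp
    rw [claim1 C z] at h0
    have hFreal : (∑ p : Fin k → Fin n, (Complex.normSq (FzAux C z p) : ℝ)) = 0 := by
      have : ∀ p : Fin k → Fin n,
          star (FzAux C z p) * FzAux C z p = ((Complex.normSq (FzAux C z p) : ℝ) : ℂ) := by
        intro p
        rw [Complex.star_def, Complex.normSq_eq_conj_mul_self]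
      simp_rw [this] at h0
      exact_mod_cast h0
    have hF : ∀ p : Fin k → Fin n, FzAux C z p = 0 := by
      intro p
      have hnn : ∀ p ∈ Finset.univ, (0:ℝ) ≤ (Complex.normSq (FzAux C z p) : ℝ) :=
        fun p _ => Complex.normSq_nonneg _
      have := (Finset.sum_eq_zero_iff_of_nonneg hnn).mp hFreal p (Finset.mem_univ p)
      exact Complex.normSq_eq_zero.mp this
    rw [claim2 C z x]
    refine Finset.sum_eq_zero fun p _ => ?_
    rw [hF p]
    simp
  · rintro v ⟨y, rfl⟩
    have expand : (Matrix.of fun i j => ∏ m, ((C m)ᴴ * C m) i j).mulVecLin y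
        = ∑ j, y j • (fun i => ∏ m, ((C m)ᴴ * C m).mulVec (Pi.single j 1) i) := by
      have single : ∀ (M : Matrix (Fin n) (Fin n) ℂ) (j i : Fin n),
          M.mulVec (Pi.single j 1) i = M i j := by
        intro M j i
        rw [Matrix.mulVec_single]
        exact mul_one _
      funext i
      simp only [single]
      simp only [mulVecLin_apply, mulVec, dotProduct, Matrix.of_apply, Finset.sum_apply,
        Pi.smul_apply, smul_eq_mul]
      exact Finset.sum_congr rfl fun j _ => mul_comm _ _
    rw [expand]
    refine Submodule.sum_mem _ fun j _ => Submodule.smul_mem _ _ ?_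
    apply Submodule.subset_span
    exact ⟨fun _ => Pi.single j 1, rfl⟩
end

section
/- For n×n positive semidefinite complex matrices A₁,…,A_k, the span of the products (A₁x)∘⋯∘(A_kx) over a single vector x ∈ ℂⁿ equals the range of A₁∘⋯∘A_k. -/
open Matrix
open scoped ComplexOrder

lemma range_conjTranspose_mul_self_aux {N P : Type*} [Fintype N] [Fintype P] [DecidableEq N]
    (W : Matrix P N ℂ) :
    LinearMap.range (Matrix.mulVecLin (Wᴴ * W)) = LinearMap.range (Matrix.mulVecLin Wᴴ) := by
  apply Submodule.eq_of_le_of_finrank_eq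
  · rw [Matrix.mulVecLin_mul]
    exact LinearMap.range_comp_le_range _ _
  · show (Wᴴ * W).rank = Wᴴ.rank
    rw [Matrix.rank_conjTranspose_mul_self, Matrix.rank_conjTranspose]

lemma posSemidef_exists_eq_conjTranspose_mul_self_aux (n : ℕ) (A : Matrix (Fin n) (Fin n) ℂ)
    (hA : A.PosSemidef) : ∃ B : Matrix (Fin n) (Fin n) ℂ, A = Bᴴ * B := by
  open scoped MatrixOrder in
  obtain ⟨X, hX, -, h⟩ := CFC.exists_sqrt_of_isSelfAdjoint_of_quasispectrumRestricts hA.isHermitian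
    (QuasispectrumRestricts.nnreal_of_nonneg hA.nonneg)
  refine ⟨X, ?_⟩
  rw [← star_eq_conjTranspose, hX.star_eq]
  simpa using h.symm

/-- For n×n positive semidefinite complex matrices A₁,…,A_k, the span of the products
(A₁x)∘⋯∘(A_kx) over a single vector x ∈ ℂⁿ equals the range of A₁∘⋯∘A_k. -/
theorem stmt2 (n k : ℕ) (A : Fin k → Matrix (Fin n) (Fin n) ℂ)
    (hA : ∀ m, (A m).PosSemidef) :
    Submodule.span ℂ
      {v : Fin n → ℂ | ∃ x : Fin n → ℂ, v = fun i => ∏ m, (A m).mulVec x i}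
    = LinearMap.range (Matrix.mulVecLin (Matrix.of fun i j => ∏ m, A m i j)) := by
  classical
  -- choose B m with A m = (B m)ᴴ * B m
  choose B hB using fun m => posSemidef_exists_eq_conjTranspose_mul_self_aux n (A m) (hA m)
  set W : Matrix (Fin k → Fin n) (Fin n) ℂ :=
    Matrix.of (fun p i => ∏ m, B m (p m) i) with hW
  have hH : (Matrix.of fun i j => ∏ m, A m i j) = Wᴴ * W := by
    ext i j
    simp only [Matrix.of_apply, Matrix.mul_apply, Matrix.conjTranspose_apply, hW]
    calc ∏ m, A m i j = ∏ m, ∑ p, (star (B m p i)) * B m p j := by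
          refine Finset.prod_congr rfl fun m _ => ?_
          rw [hB m]
          simp [Matrix.mul_apply, Matrix.conjTranspose_apply]
      _ = ∑ p : Fin k → Fin n, ∏ m, (star (B m (p m) i)) * B m (p m) j := by
          rw [Finset.prod_univ_sum]
          apply Finset.sum_congr
          · ext p; simp [Fintype.mem_piFinset]
          · intro p _; rfl
      _ = ∑ p : Fin k → Fin n, star (∏ m, B m (p m) i) * ∏ m, B m (p m) j := by
          simp [Finset.prod_mul_distrib]
  -- v-from-x lies in range of Wᴴ
  have hv : ∀ x : Fin n → ℂ, (fun i => ∏ m, (A m).mulVec x i)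
      = Wᴴ.mulVec (fun p => ∏ m, (B m).mulVec x (p m)) := by
    intro x
    ext i
    have h1 : ∀ m, (A m).mulVec x i = ∑ p, star (B m p i) * (B m).mulVec x p := by
      intro m
      rw [hB m, ← Matrix.mulVec_mulVec]
      simp [Matrix.mulVec, dotProduct, Matrix.conjTranspose_apply]
    calc ∏ m, (A m).mulVec x i
        = ∏ m, ∑ p, star (B m p i) * (B m).mulVec x p := by
          exact Finset.prod_congr rfl fun m _ => h1 m
      _ = ∑ p : Fin k → Fin n, ∏ m, star (B m (p m) i) * (B m).mulVec x (p m) := by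
          rw [Finset.prod_univ_sum]
          apply Finset.sum_congr
          · ext p; simp [Fintype.mem_piFinset]
          · intro p _; rfl
      _ = ∑ p : Fin k → Fin n, star (∏ m, B m (p m) i) * ∏ m, (B m).mulVec x (p m) := by
          simp [Finset.prod_mul_distrib]
      _ = Wᴴ.mulVec (fun p => ∏ m, (B m).mulVec x (p m)) i := by
          simp [Matrix.mulVec, dotProduct, Matrix.conjTranspose_apply, hW]
  apply le_antisymm
  · rw [Submodule.span_le, hH, range_conjTranspose_mul_self_aux]
    rintro v ⟨x, rfl⟩
    exact ⟨(fun p => ∏ m, (B m).mulVec x (p m)), (hv x).symm⟩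
  · rw [Matrix.range_mulVecLin, Submodule.span_le]
    rintro v ⟨j, rfl⟩
    apply Submodule.subset_span
    refine ⟨Pi.single j 1, ?_⟩
    ext i
    simp [Matrix.mulVec_single_one]
end

section
/- For any n×n complex matrices B₁,…,B_k, the vector (B₁x₁)∘⋯∘(B_kx_k) lies in the range of (B₁B₁*)∘⋯∘(B_kB_k*) for all x₁,…,x_k ∈ ℂⁿ. -/
open Matrix

open ComplexOrder in
lemma range_self_mul_conjTranspose {m p : Type*} [Fintype m] [Fintype p] [DecidableEq m]
    (A : Matrix m p ℂ) :
    LinearMap.range (A * Aᴴ).mulVecLin = LinearMap.range A.mulVecLin := by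
  apply Submodule.eq_of_le_of_finrank_eq
  · rintro _ ⟨y, rfl⟩
    exact ⟨Aᴴ.mulVec y, by simp [mulVecLin_mul]⟩
  · exact Matrix.rank_self_mul_conjTranspose A

/-- For any n×n complex matrices B₁,…,B_k, the vector (B₁x₁)∘⋯∘(B_kx_k) lies in the
range of (B₁B₁*)∘⋯∘(B_kB_k*) for all x₁,…,x_k ∈ ℂⁿ. -/
theorem stmt3 (n k : ℕ) (B : Fin k → Matrix (Fin n) (Fin n) ℂ)
    (x : Fin k → (Fin n → ℂ)) :
    (fun i => ∏ m, (B m).mulVec (x m) i) ∈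
      LinearMap.range
        (Matrix.mulVecLin (Matrix.of fun i j => ∏ m, (B m * (B m)ᴴ) i j)) := by
  set C : Matrix (Fin n) (Fin k → Fin n) ℂ := Matrix.of fun i p => ∏ m, B m i (p m) with hC
  have hM : (Matrix.of fun i j => ∏ m, (B m * (B m)ᴴ) i j) = C * Cᴴ := by
    ext i j
    simp only [Matrix.mul_apply, Matrix.conjTranspose_apply, hC, Matrix.of_apply,
      Matrix.of_apply]
    rw [Finset.prod_univ_sum]
    congr 1
    ext p
    rw [star_prod, ← Finset.prod_mul_distrib]
  have hv : (fun i => ∏ m, (B m).mulVec (x m) i) =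
      C.mulVec (fun p => ∏ m, x m (p m)) := by
    ext i
    simp only [Matrix.mulVec, dotProduct, hC, Matrix.of_apply]
    rw [Finset.prod_univ_sum]
    congr 1
    ext p
    rw [← Finset.prod_mul_distrib]
  rw [hM, range_self_mul_conjTranspose, hv]
  exact ⟨_, rfl⟩
end

section
/- Let B₁,…,B_k be n×n complex matrices and let E be the orthogonal projection onto the orthogonal complement of range((B₁B₁*)∘⋯∘(B_kB_k*)). Then the element Σ_{i=1}^n (B₁*e_i)⊗⋯⊗(B_k*e_i)⊗(conj(E)e_i) of the (k+1)-fold tensor product (ℂⁿ)^{⊗(k+1)} is zero. -/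
open Matrix
open scoped TensorProduct ComplexConjugate

private lemma sym_ker_eq_orth {n : ℕ}
    {T : EuclideanSpace ℂ (Fin n) →ₗ[ℂ] EuclideanSpace ℂ (Fin n)}
    (hT : T.IsSymmetric) : LinearMap.ker T = (LinearMap.range T)ᗮ := by
  ext x
  simp only [LinearMap.mem_ker, Submodule.mem_orthogonal]
  constructor
  · rintro h u ⟨y, rfl⟩
    rw [hT y x, h, inner_zero_right]
  · intro h
    have h2 := h (T (T x)) ⟨T x, rfl⟩
    rw [hT (T x) x] at h2
    exact inner_self_eq_zero.mp h2

private lemma key {n k : ℕ} (B : Fin k → Matrix (Fin n) (Fin n) ℂ)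
    (E : Matrix (Fin n) (Fin n) ℂ) (hE1 : Eᴴ = E)
    (hE3 : LinearMap.range
        (Matrix.toEuclideanLin E)
      = (LinearMap.range (Matrix.toEuclideanLin
          (Matrix.of fun i j => ∏ m, (B m * (B m)ᴴ) i j)))ᗮ)
    (t : Fin k → Fin n) :
    E.mulVec (fun i => ∏ m, B m i (t m)) = 0 := by
  classical
  set A : Matrix (Fin n) (Fin n) ℂ :=
    Matrix.of (fun i j => ∏ m, (B m * (B m)ᴴ) i j) with hA
  set w : Fin n → ℂ := fun i => ∏ m, B m i (t m) with hw
  have hBH : ∀ (m : Fin k) i j, star ((B m * (B m)ᴴ) j i) = (B m * (B m)ᴴ) i j := by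
    intro m i j
    have h := Matrix.isHermitian_mul_conjTranspose_self (B m)
    conv_rhs => rw [← h]
    simp [conjTranspose_apply]
  have hAH : Aᴴ = A := by
    ext i j
    simp only [conjTranspose_apply, hA, Matrix.of_apply, star_prod]
    exact Finset.prod_congr rfl fun m _ => hBH m i j
  have hAeq : ∀ i j, A i j = ∑ s : Fin k → Fin n,
      (∏ m, B m i (s m)) * star (∏ m, B m j (s m)) := by
    intro i j
    have h1 : A i j = ∏ m, ∑ p : Fin n, B m i p * star (B m j p) := by
      simp [hA, Matrix.mul_apply, conjTranspose_apply]
    rw [h1]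
    rw [show (fun (m : Fin k) => ∑ p : Fin n, B m i p * star (B m j p))
        = fun m => ∑ p ∈ Finset.univ, B m i p * star (B m j p) from rfl]
    rw [Finset.prod_univ_sum]
    rw [← Fintype.sum_equiv (Equiv.refl (Fin k → Fin n)) _ _ (fun _ => rfl)]
    · refine Finset.sum_congr ?_ fun s _ => ?_
      · simp [Fintype.piFinset_univ]
      · rw [star_prod, ← Finset.prod_mul_distrib]
  have hTsym : (Matrix.toEuclideanLin A).IsSymmetric :=
    Matrix.isHermitian_iff_isSymmetric.mp hAH
  have hSsym : (Matrix.toEuclideanLin E).IsSymmetric :=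
    Matrix.isHermitian_iff_isSymmetric.mp hE1
  have hker : LinearMap.ker (Matrix.toEuclideanLin E)
      = LinearMap.range (Matrix.toEuclideanLin A) := by
    rw [sym_ker_eq_orth hSsym, hE3, Submodule.orthogonal_orthogonal]
  have hrange : LinearMap.range (Matrix.toEuclideanLin A)
      = (LinearMap.ker (Matrix.toEuclideanLin A))ᗮ := by
    rw [sym_ker_eq_orth hTsym, Submodule.orthogonal_orthogonal]
  set w' : EuclideanSpace ℂ (Fin n) := (WithLp.equiv 2 (Fin n → ℂ)).symm w with hw'
  have hmem : w' ∈ LinearMap.ker (Matrix.toEuclideanLin E) := by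
    rw [hker, hrange, Submodule.mem_orthogonal]
    intro u hu
    set y : Fin n → ℂ := WithLp.equiv 2 (Fin n → ℂ) u with hy
    have hAy : A.mulVec y = 0 := by
      have h1 : WithLp.equiv 2 (Fin n → ℂ) (Matrix.toEuclideanLin A u) = 0 := by
        rw [LinearMap.mem_ker.mp hu]; rfl
      exact h1
    set c : (Fin k → Fin n) → ℂ :=
      fun s => ∑ i, star (y i) * ∏ m, B m i (s m) with hc
    have h1 : (star y) ⬝ᵥ (A.mulVec y) = ∑ s : Fin k → Fin n, c s * star (c s) := by
      have hcs : ∀ s, star (c s) = ∑ j, y j * star (∏ m, B m j (s m)) := by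
        intro s
        rw [hc]
        simp only [star_sum, star_mul', star_star]
      calc (star y) ⬝ᵥ (A.mulVec y)
          = ∑ i, ∑ j, ∑ s : Fin k → Fin n,
            (star (y i) * ∏ m, B m i (s m)) * (y j * star (∏ m, B m j (s m))) := by
            simp only [dotProduct, mulVec, Pi.star_apply, hAeq, Finset.mul_sum,
              Finset.sum_mul]
            refine Finset.sum_congr rfl fun i _ => Finset.sum_congr rfl fun j _ =>
              Finset.sum_congr rfl fun s _ => by ring
        _ = ∑ i, ∑ s : Fin k → Fin n, ∑ j,
            (star (y i) * ∏ m, B m i (s m)) * (y j * star (∏ m, B m j (s m))) := by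
            exact Finset.sum_congr rfl fun i _ => Finset.sum_comm
        _ = ∑ s : Fin k → Fin n, ∑ i, ∑ j,
            (star (y i) * ∏ m, B m i (s m)) * (y j * star (∏ m, B m j (s m))) := by
            exact Finset.sum_comm
        _ = ∑ s : Fin k → Fin n, c s * star (c s) := by
            refine Finset.sum_congr rfl fun s _ => ?_
            rw [hc, hcs s, Finset.sum_mul_sum]
    have h2 : ∑ s : Fin k → Fin n, c s * star (c s) = 0 := by
      rw [← h1, hAy, dotProduct_zero]
    have h3 : ∑ s : Fin k → Fin n, (Complex.normSq (c s) : ℂ) = 0 := by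
      rw [← h2]
      exact Finset.sum_congr rfl fun s _ => (Complex.mul_conj (c s)).symm
    have h4 : ∑ s : Fin k → Fin n, Complex.normSq (c s) = 0 := by
      have := h3
      push_cast at this
      exact_mod_cast this
    have h5 : c t = 0 := by
      have h6 := (Finset.sum_eq_zero_iff_of_nonneg
        (fun s _ => Complex.normSq_nonneg (c s))).mp h4 t (Finset.mem_univ t)
      exact Complex.normSq_eq_zero.mp h6
    have h7 : inner ℂ u w' = (0 : ℂ) := by
      rw [← h5, hc]
      simp only [PiLp.inner_apply, RCLike.inner_apply]
      exact Finset.sum_congr rfl fun i _ => mul_comm _ _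
    exact h7
  have h8 : Matrix.toEuclideanLin E w' = 0 := LinearMap.mem_ker.mp hmem
  rw [hw', WithLp.equiv_symm_apply, Matrix.toEuclideanLin_apply_piLp_toLp] at h8
  have h9 := congrArg (WithLp.equiv 2 (Fin n → ℂ)) h8
  simpa using h9

/-- Let B₁,…,B_k be n×n complex matrices and let E be the orthogonal projection onto
the orthogonal complement of range((B₁B₁*)∘⋯∘(B_kB_k*)). Then
Σ_{i=1}^n (B₁*e_i)⊗⋯⊗(B_k*e_i)⊗(conj(E)e_i) = 0 in (ℂⁿ)^{⊗(k+1)}. -/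
theorem stmt5 (n k : ℕ) (B : Fin k → Matrix (Fin n) (Fin n) ℂ)
    (E : Matrix (Fin n) (Fin n) ℂ) (hE1 : Eᴴ = E) (hE2 : E * E = E)
    (hE3 : LinearMap.range
        (Matrix.toEuclideanLin E)
      = (LinearMap.range (Matrix.toEuclideanLin
          (Matrix.of fun i j => ∏ m, (B m * (B m)ᴴ) i j)))ᗮ) :
    (∑ i : Fin n,
      PiTensorProduct.tprod ℂ
        (Fin.snoc (fun m : Fin k => (B m)ᴴ.mulVec (Pi.single i 1))
          ((E.map (starRingEnd ℂ)).mulVec (Pi.single i 1))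
          : Fin (k + 1) → (Fin n → ℂ)))
    = 0 := by
  classical
  have expand : ∀ h : Fin (k+1) → (Fin n → ℂ),
      (PiTensorProduct.tprod ℂ h) = ∑ d : Fin (k+1) → Fin n,
        (∏ m, h m (d m)) •
          PiTensorProduct.tprod ℂ (fun m => (Pi.single (d m) 1 : Fin n → ℂ)) := by
    intro h
    have h1 : h = fun m => ∑ p : Fin n, h m p • (Pi.single p 1 : Fin n → ℂ) := by
      funext m q
      simp [Pi.single_apply, Finset.sum_apply]
    conv_lhs => rw [h1]
    rw [MultilinearMap.map_sum]
    exact Finset.sum_congr rfl fun d _ => MultilinearMap.map_smul_univ _ _ _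
  rw [Finset.sum_congr rfl fun i _ => expand _]
  rw [Finset.sum_comm]
  refine Finset.sum_eq_zero fun d _ => ?_
  rw [← Finset.sum_smul]
  convert zero_smul ℂ _
  -- coefficient is zero
  have h0 := key B E hE1 hE3 (fun m => d (Fin.castSucc m))
  have h0q := congrFun h0 (d (Fin.last k))
  simp only [mulVec, dotProduct, Pi.zero_apply] at h0q
  calc (∑ i : Fin n, ∏ m : Fin (k+1),
        (Fin.snoc (fun m : Fin k => (B m)ᴴ.mulVec (Pi.single i 1))
          ((E.map (starRingEnd ℂ)).mulVec (Pi.single i 1))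
          : Fin (k + 1) → (Fin n → ℂ)) m (d m))
      = ∑ i : Fin n, conj
          (E (d (Fin.last k)) i * ∏ m : Fin k, B m i (d (Fin.castSucc m))) := by
        refine Finset.sum_congr rfl fun i _ => ?_
        rw [Fin.prod_univ_castSucc]
        simp only [Fin.snoc_castSucc, Fin.snoc_last, Matrix.mulVec_single_one, Matrix.col_apply,
          conjTranspose_apply, Matrix.map_apply, mul_one]
        rw [_root_.map_mul, map_prod]
        simp only [← Complex.star_def]
        ring
    _ = conj (∑ i : Fin n, E (d (Fin.last k)) i * ∏ m : Fin k, B m i (d (Fin.castSucc m))) := by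
        rw [map_sum]
    _ = 0 := by rw [h0q]; simp
end

section
/- Let B₁,…,B_k be n×n complex matrices and E an n×n complex matrix with E* = E² = E. Then the squared norm of Σ_{i=1}^n (B₁*e_i)⊗⋯⊗(B_k*e_i)⊗(conj(E)e_i) in the inner product space (ℂⁿ)^{⊗(k+1)} equals trace(E·((B₁B₁*)∘⋯∘(B_kB_k*))). -/
open Matrix

/-- Let B₁,…,B_k be n×n complex matrices and E an n×n matrix with E* = E² = E.
The squared norm of Σ_{i=1}^n (B₁*e_i)⊗⋯⊗(B_k*e_i)⊗(conj(E)e_i) in (ℂⁿ)^{⊗(k+1)}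
equals trace(E·((B₁B₁*)∘⋯∘(B_kB_k*))). Here the (k+1)-fold tensor power of ℂⁿ is
realized concretely as functions (Fin (k+1) → Fin n) → ℂ, a simple tensor
u₀⊗⋯⊗u_k being g ↦ ∏ m, u_m (g m), with the induced inner product
⟨T,S⟩ = Σ_g T g · conj(S g). -/
theorem stmt6 (n k : ℕ) (B : Fin k → Matrix (Fin n) (Fin n) ℂ)
    (E : Matrix (Fin n) (Fin n) ℂ) (hE1 : Eᴴ = E) (hE2 : E * E = E)
    (T : (Fin (k + 1) → Fin n) → ℂ)
    (hT : T = fun g => ∑ i : Fin n,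
      ∏ m : Fin (k + 1),
        (Fin.snoc (fun m' : Fin k => (B m')ᴴ.mulVec (Pi.single i 1))
          ((E.map (starRingEnd ℂ)).mulVec (Pi.single i 1))
          : Fin (k + 1) → (Fin n → ℂ)) m (g m)) :
    (∑ g : Fin (k + 1) → Fin n, T g * star (T g))
    = (E * Matrix.of fun i j => ∏ m, (B m * (B m)ᴴ) i j).trace := by
  subst hT
  set v : Fin n → Fin (k+1) → Fin n → ℂ := fun i =>
    Fin.snoc (fun m' : Fin k => (B m')ᴴ.mulVec (Pi.single i 1))
      ((E.map (starRingEnd ℂ)).mulVec (Pi.single i 1)) with hv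
  have key : ∀ i j : Fin n,
      (∑ g : Fin (k+1) → Fin n, ∏ m, v i m (g m) * star (v j m (g m)))
        = E i j * ∏ m, (B m * (B m)ᴴ) j i := by
    intro i j
    rw [← Fintype.piFinset_univ,
      ← Finset.prod_univ_sum (t := fun _ : Fin (k+1) => (Finset.univ : Finset (Fin n)))
        (f := fun m x => v i m x * star (v j m x))]
    rw [Fin.prod_univ_castSucc]
    have hlast : (∑ x : Fin n, v i (Fin.last k) x * star (v j (Fin.last k) x)) = E i j := by
      simp only [hv, Fin.snoc_last, Matrix.mulVec_single, MulOpposite.op_one, one_smul, Matrix.col_apply, Matrix.map_apply, mul_one]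
      have : ∀ x : Fin n, (starRingEnd ℂ) (E x i) * star ((starRingEnd ℂ) (E x j))
          = Eᴴ i x * E x j := by
        intro x; simp [Matrix.conjTranspose_apply, mul_comm]
      simp_rw [this]
      rw [← Matrix.mul_apply, hE1, hE2]
    have hcast : ∀ m : Fin k, (∑ x : Fin n, v i m.castSucc x * star (v j m.castSucc x))
        = (B m * (B m)ᴴ) j i := by
      intro m
      simp only [hv, Fin.snoc_castSucc, Matrix.mulVec_single, mul_one]
      rw [Matrix.mul_apply]
      apply Finset.sum_congr rfl
      intro x _
      simp [Matrix.conjTranspose_apply, mul_comm]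
    rw [hlast]
    rw [mul_comm]
    congr 1
    exact Finset.prod_congr rfl fun m _ => hcast m
  calc (∑ g : Fin (k + 1) → Fin n, (∑ i : Fin n, ∏ m, v i m (g m)) * star (∑ j : Fin n, ∏ m, v j m (g m)))
      = ∑ g : Fin (k+1) → Fin n, ∑ i : Fin n, ∑ j : Fin n, ∏ m, v i m (g m) * star (v j m (g m)) := by
        apply Finset.sum_congr rfl; intro g _
        rw [star_sum, Finset.sum_mul_sum]
        apply Finset.sum_congr rfl; intro i _
        apply Finset.sum_congr rfl; intro j _
        rw [star_prod, ← Finset.prod_mul_distrib]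
    _ = ∑ i : Fin n, ∑ j : Fin n, ∑ g : Fin (k+1) → Fin n, ∏ m, v i m (g m) * star (v j m (g m)) := by
        rw [Finset.sum_comm]
        apply Finset.sum_congr rfl; intro i _
        rw [Finset.sum_comm]
    _ = ∑ i : Fin n, ∑ j : Fin n, E i j * ∏ m, (B m * (B m)ᴴ) j i := by
        simp_rw [key]
    _ = (E * Matrix.of fun i j => ∏ m, (B m * (B m)ᴴ) i j).trace := by
        simp [Matrix.trace, Matrix.mul_apply, Matrix.diag]
end
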